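/- Let m ∈ ℕ with m ≥ 2, let p_0, …, p_{2^m−1} ∈ [0,1) with ∑_{k=0}^{2^m−1} p_k = 1 and with p_k = 0 for at least one index k, let f_k(x) = (x+k)/2^m, and let μ be a Borel probability measure on [0,1] satisfying μ(B) = ∑_{k=0}^{2^m−1} p_k · μ(f_k^{-1}(B)) for every Borel set B ⊆ [0,1], with probability distribution function Φ(x) = μ([0,x]). Then the function φ : [0,1] → [0,1] defined by φ(x) = (1/m) · ∑_{i=0}^{m−1} ∑_{k=0}^{2^i−1} [Φ((x+k)/2^i) − Φ(k/2^i)] is NOT strictly increasing; in fact φ is constant on some nondegenerate subinterval of [0,1]. -/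

import Mathlib

open MeasureTheory

namespace Stmt11Aux

def E (m i : ℕ) : ℕ := 2*(i+1)*m*m + (m - i)

def NN (m : ℕ) : ℕ := 2*m*m*m + 4

noncomputable def A0 (m j : ℕ) : ℝ := ∑ i' ∈ Finset.range m, (j:ℝ)/2^(E m i')

def CN (m j i : ℕ) : ℕ := ∑ i' ∈ Finset.range (i+1), j * 2^(E m i - E m i')

lemma E_rel (m : ℕ) {i' i : ℕ} (h : i' ≤ i) (hi : i < m) :
    E m i' + (i - i') * (2*m*m - 1) = E m i := by
  obtain ⟨d, rfl⟩ := Nat.exists_eq_add_of_le h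
  unfold E
  have h1 : i' ≤ m := by omega
  have h2 : i' + d ≤ m := by omega
  have h3 : 1 ≤ 2*m*m := by nlinarith
  rw [Nat.add_sub_cancel_left]
  zify [h1, h2, h3]
  ring

lemma E_mono (m : ℕ) {i' i : ℕ} (h : i' ≤ i) (hi : i < m) : E m i' ≤ E m i := by
  have := E_rel m h hi; omega

lemma E_gap (m : ℕ) (hm : 2 ≤ m) {i' i : ℕ} (h : i < i') (hi : i' < m) :
    E m i + (2*m*m - 1) ≤ E m i' := by
  have h1 := E_rel m (le_of_lt h) hi
  have h2 : 1 ≤ i' - i := by omega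
  have h3 : 1 * (2*m*m - 1) ≤ (i' - i) * (2*m*m - 1) := Nat.mul_le_mul_right _ h2
  omega

lemma m_le_E (m i : ℕ) (hm : 2 ≤ m) : m ≤ E m i := by
  unfold E
  have h : 2*(i+1)*m*1 ≤ 2*(i+1)*m*m := Nat.mul_le_mul_left _ (by omega)
  have h2 : m ≤ 2*(i+1)*m := by nlinarith
  omega

lemma E_sub_ge_m (m : ℕ) (hm : 2 ≤ m) {i' i : ℕ} (h : i' < i) (hi : i < m) :
    m ≤ E m i - E m i' := by
  have h1 := E_gap m hm h hi
  have h2 : 2*m*1 ≤ 2*m*m := Nat.mul_le_mul_left _ (by omega)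
  omega

lemma E_add_self (m : ℕ) {i : ℕ} (hi : i < m) : E m i + i = (2*(i+1)*m + 1) * m := by
  unfold E
  have h : m - i + i = m := by omega
  calc 2*(i+1)*m*m + (m - i) + i = 2*(i+1)*m*m + ((m - i) + i) := by ring
    _ = 2*(i+1)*m*m + m := by rw [h]
    _ = (2*(i+1)*m + 1) * m := by ring

lemma E_le_NN (m : ℕ) (hm : 2 ≤ m) {i : ℕ} (hi : i < m) : E m i + 3 ≤ NN m := by
  unfold E NN
  have h3 : 2*(i+1)*m*m + (2*m*m)*(m-(i+1)) = 2*m*m*m := by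
    zify [show i + 1 ≤ m from hi]; ring
  by_cases hc : i + 1 = m
  · have h4 : m - (i+1) = 0 := by omega
    rw [h4, Nat.mul_zero, Nat.add_zero] at h3
    omega
  · have h7 : 1 ≤ m - (i+1) := by omega
    have h6 : 2*m*m*1 ≤ 2*m*m*(m-(i+1)) := Nat.mul_le_mul_left _ h7
    have h5 : 2*m*1 ≤ 2*m*m := Nat.mul_le_mul_left _ (by omega)
    omega

lemma CN_mod (m j : ℕ) (hm : 2 ≤ m) (hj : j < 2^m) {i : ℕ} (hi : i < m) :
    CN m j i % 2^m = j := by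
  unfold CN
  rw [Finset.sum_range_succ, Nat.sub_self, pow_zero, mul_one]
  have hdvd : 2^m ∣ ∑ i' ∈ Finset.range i, j * 2^(E m i - E m i') := by
    apply Finset.dvd_sum
    intro i' hi'
    rw [Finset.mem_range] at hi'
    exact Dvd.dvd.mul_left (pow_dvd_pow 2 (E_sub_ge_m m hm hi' hi)) j
  obtain ⟨c, hc⟩ := hdvd
  rw [hc, Nat.mul_add_mod, Nat.mod_eq_of_lt hj]


lemma two_pow_pos' (n : ℕ) : (0:ℝ) < 2^n := pow_pos two_pos n

lemma A0_split (m j : ℕ) {i : ℕ} (hi : i < m) :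
    (2:ℝ)^(E m i) * A0 m j
      = (CN m j i : ℝ) + ∑ i' ∈ Finset.Ico (i+1) m, (j:ℝ) * (2^(E m i) / 2^(E m i')) := by
  unfold A0
  rw [Finset.mul_sum, ← Finset.sum_range_add_sum_Ico _ (show i+1 ≤ m from hi)]
  congr 1
  · unfold CN
    push_cast
    apply Finset.sum_congr rfl
    intro i' hi'
    rw [Finset.mem_range] at hi'
    have hle : E m i' ≤ E m i := E_mono m (by omega) hi
    have hpow : (2:ℝ)^(E m i - E m i') * 2^(E m i') = 2^(E m i) := by
      rw [← pow_add, Nat.sub_add_cancel hle]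
    have h2 : (2:ℝ)^(E m i') ≠ 0 := ne_of_gt (two_pow_pos' _)
    field_simp
    rw [← hpow]
    ring
  · apply Finset.sum_congr rfl
    intro i' _
    ring

lemma R_bound (m j : ℕ) (hm : 2 ≤ m) (hj : j < 2^m) {i : ℕ} (hi : i < m) :
    ∑ i' ∈ Finset.Ico (i+1) m, (j:ℝ) * (2^(E m i) / 2^(E m i')) ≤ 1/8 := by
  have hT : ∀ i' ∈ Finset.Ico (i+1) m,
      (j:ℝ) * (2^(E m i) / 2^(E m i')) ≤ 2^m / 2^(2*m*m - 1) := by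
    intro i' hi'
    rw [Finset.mem_Ico] at hi'
    have hD : E m i + (2*m*m - 1) ≤ E m i' := E_gap m hm (by omega) hi'.2
    have h1 : (2:ℝ)^(E m i) * 2^(2*m*m-1) ≤ 2^(E m i') := by
      rw [← pow_add]; exact pow_le_pow_right₀ one_le_two hD
    have hj' : (j:ℝ) ≤ 2^m := by
      have : (j:ℝ) ≤ (2^m : ℕ) := by exact_mod_cast le_of_lt hj
      simpa using this
    rw [mul_div_assoc'] at *
    rw [div_le_div_iff₀ (two_pow_pos' _) (two_pow_pos' _)]
    calc (j:ℝ) * 2^(E m i) * 2^(2*m*m-1) = j * (2^(E m i) * 2^(2*m*m-1)) := by ring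
      _ ≤ 2^m * 2^(E m i') := by
          apply mul_le_mul hj' h1 (by positivity) (by positivity)
  calc ∑ i' ∈ Finset.Ico (i+1) m, (j:ℝ) * (2^(E m i) / 2^(E m i'))
      ≤ (Finset.Ico (i+1) m).card • ((2:ℝ)^m / 2^(2*m*m - 1)) := Finset.sum_le_card_nsmul _ _ _ hT
    _ = ((Finset.Ico (i+1) m).card : ℝ) * (2^m / 2^(2*m*m - 1)) := nsmul_eq_mul _ _
    _ ≤ (2:ℝ)^m * (2^m / 2^(2*m*m - 1)) := by
        apply mul_le_mul_of_nonneg_right _ (by positivity)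
        rw [Nat.card_Ico]
        have h1 : (m : ℝ) ≤ 2^m := by
          have := Nat.lt_two_pow_self (n := m)
          have : (m:ℝ) < (2^m : ℕ) := by exact_mod_cast this
          simpa using le_of_lt this
        have h2 : ((m - (i+1) : ℕ) : ℝ) ≤ (m : ℝ) := by
          exact_mod_cast Nat.sub_le m (i+1)
        linarith
    _ ≤ 1/8 := by
        have hexp : 2*m+3 ≤ 2*m*m-1 := by
          have h2 : 2*m*2 ≤ 2*m*m := Nat.mul_le_mul_left _ hm
          omega
        have key : (2:ℝ)^(2*m+3) ≤ 2^(2*m*m-1) := pow_le_pow_right₀ one_le_two hexp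
        have h8 : (2:ℝ)^m * (2^m/2^(2*m*m-1)) = 2^(2*m+3)/(2^(2*m*m-1) * 8) := by
          rw [show 2*m+3 = m + m + 3 by ring, pow_add, pow_add]
          norm_num
          ring
        rw [h8, div_le_div_iff₀ (by positivity) (by norm_num)]
        nlinarith [two_pow_pos' (2*m*m-1)]


lemma A0_nonneg (m j : ℕ) : 0 ≤ A0 m j := by
  unfold A0; positivity

lemma A0_le (m j : ℕ) (hm : 2 ≤ m) (hj : j < 2^m) : A0 m j ≤ 1/4 := by
  unfold A0
  have hE0 : E m 0 = 2*m*m + m := by simp [E]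
  have hT : ∀ i' ∈ Finset.range m, (j:ℝ)/2^(E m i') ≤ 2^m / 2^(2*m*m + m) := by
    intro i' hi'
    rw [Finset.mem_range] at hi'
    have hle : E m 0 ≤ E m i' := E_mono m (Nat.zero_le _) hi'
    rw [hE0] at hle
    have h1 : (2:ℝ)^(2*m*m+m) ≤ 2^(E m i') := pow_le_pow_right₀ one_le_two hle
    have hj' : (j:ℝ) ≤ 2^m := by
      have : (j:ℝ) ≤ (2^m : ℕ) := by exact_mod_cast le_of_lt hj
      simpa using this
    rw [div_le_div_iff₀ (two_pow_pos' _) (two_pow_pos' _)]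
    apply mul_le_mul hj' h1 (by positivity) (by positivity)
  calc ∑ i' ∈ Finset.range m, (j:ℝ)/2^(E m i')
      ≤ (Finset.range m).card • ((2:ℝ)^m / 2^(2*m*m + m)) := Finset.sum_le_card_nsmul _ _ _ hT
    _ = (m : ℝ) * (2^m / 2^(2*m*m+m)) := by rw [nsmul_eq_mul, Finset.card_range]
    _ ≤ (2:ℝ)^m * (2^m / 2^(2*m*m+m)) := by
        apply mul_le_mul_of_nonneg_right _ (by positivity)
        have := Nat.lt_two_pow_self (n := m)
        have h1 : (m:ℝ) < (2^m : ℕ) := by exact_mod_cast this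
        simpa using le_of_lt h1
    _ ≤ 1/4 := by
        have hexp : 2*m+2 ≤ 2*m*m+m := by
          have h2 : 2*m*2 ≤ 2*m*m := Nat.mul_le_mul_left _ hm
          omega
        have key : (2:ℝ)^(2*m+2) ≤ 2^(2*m*m+m) := pow_le_pow_right₀ one_le_two hexp
        have h8 : (2:ℝ)^m * (2^m/2^(2*m*m+m)) = 2^(2*m+2)/(2^(2*m*m+m) * 4) := by
          rw [show 2*m+2 = m + m + 2 by ring, pow_add, pow_add]
          norm_num
          ring
        rw [h8, div_le_div_iff₀ (by positivity) (by norm_num)]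
        nlinarith [two_pow_pos' (2*m*m+m)]

lemma pow_div_NN (m : ℕ) (hm : 2 ≤ m) {i : ℕ} (hi : i < m) :
    (2:ℝ)^(E m i) / 2^(NN m) ≤ 1/8 := by
  have hexp := E_le_NN m hm hi
  have key : (2:ℝ)^(E m i + 3) ≤ 2^(NN m) := pow_le_pow_right₀ one_le_two hexp
  rw [pow_add] at key
  rw [div_le_div_iff₀ (two_pow_pos' _) (by norm_num)]
  nlinarith [two_pow_pos' (E m i)]

lemma floor_lemma (m j : ℕ) (hm : 2 ≤ m) (hj : j < 2^m) {i : ℕ} (hi : i < m) {y : ℝ}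
    (h1 : A0 m j < y) (h2 : y ≤ A0 m j + 1/2^(NN m)) :
    ⌊(2:ℝ)^(E m i) * y⌋ = (CN m j i : ℤ) := by
  have hsplit := A0_split m j hi
  have hR0 : 0 ≤ ∑ i' ∈ Finset.Ico (i+1) m, (j:ℝ) * (2^(E m i) / 2^(E m i')) := by
    positivity
  have hR := R_bound m j hm hj hi
  have hNN := pow_div_NN m hm hi
  have hpos := two_pow_pos' (E m i)
  rw [Int.floor_eq_iff]
  push_cast
  constructor
  · nlinarith [mul_pos hpos (sub_pos.2 h1)]
  · have hy : (2:ℝ)^(E m i) * y ≤ 2^(E m i) * (A0 m j + 1/2^(NN m)) :=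
      mul_le_mul_of_nonneg_left h2 (le_of_lt hpos)
    have hd : (2:ℝ)^(E m i) * (1/2^(NN m)) = 2^(E m i)/2^(NN m) := by ring
    nlinarith


def DS (m j t : ℕ) : Set ℝ :=
  Set.Ioo (0:ℝ) 1 ∩ (fun x : ℝ => ⌊(2:ℝ)^((t+1)*m) * x⌋) ⁻¹' {n : ℤ | n % 2^m = (j:ℤ)}

lemma DS_mem {m j t : ℕ} {x : ℝ} :
    x ∈ DS m j t ↔ x ∈ Set.Ioo (0:ℝ) 1 ∧ ⌊(2:ℝ)^((t+1)*m) * x⌋ % (2^m : ℤ) = (j:ℤ) :=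
  Iff.rfl

lemma DS_meas (m j t : ℕ) : MeasurableSet (DS m j t) :=
  measurableSet_Ioo.inter
    ((Int.measurable_floor.comp (measurable_id.const_mul _)) ((Set.to_countable _).measurableSet))

lemma DS_sub (m j t : ℕ) : DS m j t ⊆ Set.Icc (0:ℝ) 1 :=
  fun _ hx => Set.Ioo_subset_Icc_self hx.1


end Stmt11Aux

open Stmt11Aux

theorem stmt_11 (m : ℕ) (hm : 2 ≤ m) (p : ℕ → ℝ)
    (hp : ∀ k < 2 ^ m, p k ∈ Set.Ico (0:ℝ) 1)
    (hsum : ∑ k ∈ Finset.range (2 ^ m), p k = 1)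
    (hzero : ∃ k < 2 ^ m, p k = 0)
    (μ : Measure ℝ) [IsProbabilityMeasure μ] (hμ : μ (Set.Icc (0:ℝ) 1) = 1)
    (hinv : ∀ B ⊆ Set.Icc (0:ℝ) 1, MeasurableSet B →
      μ B = ∑ k ∈ Finset.range (2 ^ m),
        ENNReal.ofReal (p k) * μ ((fun x : ℝ => (x + k) / 2 ^ m) ⁻¹' B))
    (Φ : ℝ → ℝ) (hΦ : ∀ x, Φ x = (μ (Set.Icc 0 x)).toReal)
    (φ : ℝ → ℝ)
    (hφ : ∀ x, φ x = (1 / m : ℝ) * ∑ i ∈ Finset.range m, ∑ k ∈ Finset.range (2 ^ i),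
      (Φ ((x + k) / 2 ^ i) - Φ (k / 2 ^ i))) :
    ¬ StrictMonoOn φ (Set.Icc (0:ℝ) 1) ∧
    ∃ a b : ℝ, a < b ∧ a ∈ Set.Icc (0:ℝ) 1 ∧ b ∈ Set.Icc (0:ℝ) 1 ∧
      ∀ x ∈ Set.Icc a b, φ x = φ a := by
  obtain ⟨j, hj, hpj⟩ := hzero
  have h2m : (0:ℝ) < 2^m := pow_pos two_pos m
  have h2mZ : (0:ℕ) < 2^m := pow_pos (by norm_num) m
  -- the complement of [0,1] is null
  have hIccC : μ (Set.Icc (0:ℝ) 1)ᶜ = 0 := by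
    rw [measure_compl measurableSet_Icc (measure_ne_top μ _), hμ, measure_univ]
    simp
  have hmono0 : ∀ s A : Set ℝ, s ∩ Set.Icc 0 1 ⊆ A → μ s ≤ μ A := by
    intro s A h
    calc μ s ≤ μ (A ∪ (Set.Icc (0:ℝ) 1)ᶜ) := by
          apply measure_mono
          intro x hx
          by_cases hx1 : x ∈ Set.Icc (0:ℝ) 1
          · exact Or.inl (h ⟨hx, hx1⟩)
          · exact Or.inr hx1
      _ ≤ μ A + μ (Set.Icc (0:ℝ) 1)ᶜ := measure_union_le _ _
      _ = μ A := by rw [hIccC, add_zero]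
  -- a fixed-point principle
  have hfix : ∀ (c : ENNReal) (q : ℝ), q < 1 → c ≠ ⊤ → c = ENNReal.ofReal q * c → c = 0 := by
    intro c q hq hctop hc
    by_contra hc0
    have h1 : ENNReal.ofReal q < 1 := ENNReal.ofReal_lt_one.2 hq
    have h2 : ENNReal.ofReal q * c < 1 * c := ENNReal.mul_lt_mul_left hc0 hctop h1
    rw [one_mul, ← hc] at h2
    exact lt_irrefl _ h2
  -- no atom at 0
  have hatom0 : μ {(0:ℝ)} = 0 := by
    have h := hinv {0} (by simp) (measurableSet_singleton 0)
    have hpre : ∀ l : ℕ, (fun x : ℝ => (x + l) / 2 ^ m) ⁻¹' {0} = {-(l:ℝ)} := by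
      intro l
      ext x
      simp only [Set.mem_preimage, Set.mem_singleton_iff, div_eq_iff (ne_of_gt h2m), zero_mul]
      constructor <;> intro h' <;> linarith
    rw [Finset.sum_eq_single_of_mem 0 (Finset.mem_range.2 h2mZ)] at h
    · rw [hpre 0] at h
      norm_num at h
      exact hfix _ _ (hp 0 h2mZ).2 (measure_ne_top μ _) h
    · intro l _ hl
      rw [hpre l]
      have : μ {-(l:ℝ)} = 0 := by
        refine le_antisymm (le_trans (hmono0 _ ∅ ?_) (by simp)) zero_le
        rintro x ⟨hx1, hx2, _⟩
        rw [Set.mem_singleton_iff] at hx1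
        have : (1:ℝ) ≤ l := by exact_mod_cast Nat.one_le_iff_ne_zero.2 hl
        simp only [hx1] at hx2 ⊢
        linarith
      rw [this, mul_zero]
  -- no atom at 1
  have hatom1 : μ {(1:ℝ)} = 0 := by
    have h := hinv {1} (by simp) (measurableSet_singleton 1)
    have hpre : ∀ l : ℕ, (fun x : ℝ => (x + l) / 2 ^ m) ⁻¹' {1} = {(2:ℝ)^m - l} := by
      intro l
      ext x
      simp only [Set.mem_preimage, Set.mem_singleton_iff, div_eq_iff (ne_of_gt h2m), one_mul]
      constructor <;> intro h' <;> linarith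
    rw [Finset.sum_eq_single_of_mem (2^m - 1) (Finset.mem_range.2 (by omega))] at h
    · rw [hpre (2^m - 1)] at h
      have hcast : ((2^m - 1 : ℕ) : ℝ) = 2^m - 1 := by
        rw [Nat.cast_sub h2mZ]
        push_cast
        ring
      rw [hcast, show (2:ℝ)^m - (2^m - 1) = 1 by ring] at h
      exact hfix _ _ (hp (2^m-1) (by omega)).2 (measure_ne_top μ _) h
    · intro l hl hlne
      rw [Finset.mem_range] at hl
      rw [hpre l]
      have : μ {(2:ℝ)^m - l} = 0 := by
        refine le_antisymm (le_trans (hmono0 _ ∅ ?_) (by simp)) zero_le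
        rintro x ⟨hx1, _, hx3⟩
        rw [Set.mem_singleton_iff] at hx1
        have hll : l + 2 ≤ 2^m := by omega
        have : (l:ℝ) + 2 ≤ 2^m := by
          have : ((l + 2 : ℕ) : ℝ) ≤ ((2^m : ℕ) : ℝ) := by exact_mod_cast hll
          push_cast at this
          linarith
        simp only [hx1] at hx3
        linarith
      rw [this, mul_zero]
  -- complement of the open interval is null
  have hIooC : μ (Set.Ioo (0:ℝ) 1)ᶜ = 0 := by
    have hsub : (Set.Ioo (0:ℝ) 1)ᶜ ⊆ ((Set.Icc (0:ℝ) 1)ᶜ ∪ {0}) ∪ {1} := by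
      intro x hx
      simp only [Set.mem_compl_iff, Set.mem_Ioo, not_and_or, not_lt] at hx
      by_cases hx1 : x ∈ Set.Icc (0:ℝ) 1
      · rw [Set.mem_Icc] at hx1
        rcases hx with h | h
        · exact Or.inl (Or.inr (le_antisymm h hx1.1))
        · exact Or.inr (le_antisymm hx1.2 h)
      · exact Or.inl (Or.inl hx1)
    refine le_antisymm (le_trans (measure_mono hsub) ?_) zero_le
    calc μ (((Set.Icc (0:ℝ) 1)ᶜ ∪ {0}) ∪ {1})
        ≤ (μ (Set.Icc (0:ℝ) 1)ᶜ + μ {0}) + μ {1} :=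
          le_trans (measure_union_le _ _) (add_le_add_left (measure_union_le _ _) _)
      _ = 0 := by rw [hIccC, hatom0, hatom1]; simp
  have hmono1 : ∀ s A : Set ℝ, s ∩ Set.Ioo 0 1 ⊆ A → μ s ≤ μ A := by
    intro s A h
    calc μ s ≤ μ (A ∪ (Set.Ioo (0:ℝ) 1)ᶜ) := by
          apply measure_mono
          intro x hx
          by_cases hx1 : x ∈ Set.Ioo (0:ℝ) 1
          · exact Or.inl (h ⟨hx, hx1⟩)
          · exact Or.inr hx1
      _ ≤ μ A + μ (Set.Ioo (0:ℝ) 1)ᶜ := measure_union_le _ _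
      _ = μ A := by rw [hIooC, add_zero]
  -- base case of the digit sets
  have h2i0 : ((j:ℝ)+1)/2^m ≤ 1 := by
    rw [div_le_one h2m]
    have : ((j+1:ℕ):ℝ) ≤ ((2^m:ℕ):ℝ) := by exact_mod_cast hj
    push_cast at this; linarith
  have hA0 : μ (DS m j 0) = 0 := by
    have hB0sub : Set.Icc ((j:ℝ)/2^m) (((j:ℝ)+1)/2^m) ⊆ Set.Icc 0 1 :=
      Set.Icc_subset_Icc (by positivity) h2i0
    have hB0 : μ (Set.Icc ((j:ℝ)/2^m) (((j:ℝ)+1)/2^m)) = 0 := by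
      rw [hinv _ hB0sub measurableSet_Icc]
      apply Finset.sum_eq_zero
      intro l hl
      rw [Finset.mem_range] at hl
      rcases eq_or_ne l j with rfl | hne
      · simp [hpj]
      · have hz : μ ((fun x : ℝ => (x + l)/2^m) ⁻¹'
            Set.Icc ((j:ℝ)/2^m) (((j:ℝ)+1)/2^m)) = 0 := by
          refine le_antisymm (le_trans (hmono0 _ ({0} ∪ {1}) ?_) ?_) zero_le
          · rintro x ⟨hx1, hx2⟩
            rw [Set.mem_preimage, Set.mem_Icc] at hx1
            rw [Set.mem_Icc] at hx2
            have ha : (j:ℝ) ≤ x + l := by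
              have h' := hx1.1
              rw [div_le_div_iff₀ h2m h2m] at h'
              exact le_of_mul_le_mul_right h' h2m
            have hb : x + l ≤ (j:ℝ) + 1 := by
              have h' := hx1.2
              rw [div_le_div_iff₀ h2m h2m] at h'
              exact le_of_mul_le_mul_right h' h2m
            rcases lt_or_gt_of_ne hne with hlt | hgt
            · have hc : (l:ℝ) + 1 ≤ j := by exact_mod_cast hlt
              right
              rw [Set.mem_singleton_iff]
              exact le_antisymm hx2.2 (by linarith)
            · have hc : (j:ℝ) + 1 ≤ l := by exact_mod_cast hgt
              left
              rw [Set.mem_singleton_iff]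
              exact le_antisymm (by linarith) hx2.1
          · refine le_trans (measure_union_le _ _) ?_
            rw [hatom0, hatom1]
            simp
        rw [hz, mul_zero]
    have hA0sub : DS m j 0 ⊆ Set.Icc ((j:ℝ)/2^m) (((j:ℝ)+1)/2^m) := by
      rintro x ⟨⟨hx0, hx1⟩, hfl⟩
      rw [Set.mem_preimage, Set.mem_setOf_eq] at hfl
      have hexp0 : (0+1)*m = m := by ring
      rw [hexp0] at hfl
      have h0 : 0 ≤ ⌊(2:ℝ)^m * x⌋ := Int.floor_nonneg.2 (by positivity)
      have h1 : ⌊(2:ℝ)^m * x⌋ < (2^m : ℤ) := by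
        rw [Int.floor_lt]
        push_cast
        nlinarith
      rw [Int.emod_eq_of_lt h0 h1] at hfl
      obtain ⟨hl', hr'⟩ := Int.floor_eq_iff.1 hfl
      rw [Set.mem_Icc]
      constructor
      · rw [div_le_iff₀ h2m]
        push_cast at hl'
        linarith
      · rw [le_div_iff₀ h2m]
        push_cast at hr'
        linarith
    exact le_antisymm (le_trans (measure_mono hA0sub) (le_of_eq hB0)) zero_le
  -- all digit sets are null
  have hAt : ∀ t, μ (DS m j t) = 0 := by
    intro t
    induction t with
    | zero => exact hA0
    | succ t ih =>
      rw [hinv _ (DS_sub m j (t+1)) (DS_meas m j (t+1))]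
      apply Finset.sum_eq_zero
      intro l hl
      have hz : μ ((fun x : ℝ => (x + l)/2^m) ⁻¹' DS m j (t+1)) = 0 := by
        refine le_antisymm (le_trans (hmono1 _ (DS m j t) ?_) (le_of_eq ih)) zero_le
        rintro y ⟨hy1, hy2⟩
        rw [Set.mem_preimage] at hy1
        obtain ⟨hmem, hfl⟩ := hy1
        rw [Set.mem_preimage, Set.mem_setOf_eq] at hfl
        refine ⟨hy2, ?_⟩
        rw [Set.mem_preimage, Set.mem_setOf_eq]
        have hkey : (2:ℝ)^((t+1+1)*m) * ((y + l)/2^m)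
            = 2^((t+1)*m) * y + (((l:ℤ) * 2^((t+1)*m) : ℤ) : ℝ) := by
          push_cast
          rw [show (t+1+1)*m = (t+1)*m + m by ring, pow_add]
          field_simp
        rw [hkey, Int.floor_add_intCast] at hfl
        have hfac : ((l : ℤ) * 2^((t+1)*m)) = ((l:ℤ) * 2^(t*m)) * 2^m := by
          rw [mul_assoc, ← pow_add]
          congr 2
          ring
        rw [hfac, Int.add_mul_emod_self_right] at hfl
        exact hfl
      rw [hz, mul_zero]
  -- the interval on which φ is constant
  set aa := A0 m j + 1/2^(NN m + 1) with haa
  set bb := A0 m j + 1/2^(NN m) with hbb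
  clear_value aa bb
  have hNN4 : (4:ℝ) ≤ 2^(NN m) := by
    have h4 : (2:ℝ)^2 ≤ 2^(NN m) := pow_le_pow_right₀ one_le_two (by unfold NN; omega)
    norm_num at h4
    exact h4
  have ha0pos : 0 < aa := by
    rw [haa]
    have := A0_nonneg m j
    positivity
  have hbb2 : bb ≤ 1/2 := by
    have h1 := A0_le m j hm hj
    have h2 : 1/(2:ℝ)^(NN m) ≤ 1/4 := by
      rw [div_le_div_iff₀ (by positivity) (by norm_num)]
      linarith
    rw [hbb]; linarith
  have haabb : aa < bb := by
    rw [haa, hbb]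
    have hlt : (1:ℝ)/2^(NN m + 1) < 1/2^(NN m) := by
      rw [div_lt_div_iff₀ (by positivity) (by positivity)]
      have : (2:ℝ)^(NN m) < 2^(NN m + 1) := by
        rw [pow_succ]
        nlinarith [pow_pos (show (0:ℝ) < 2 by norm_num) (NN m)]
      linarith
    linarith
  -- the key term lemma
  have hterm : ∀ i, i < m → ∀ k : ℕ, k < 2^i → ∀ x, aa ≤ x → x ≤ bb →
      Φ ((x + (k:ℝ))/2^i) = Φ ((aa + (k:ℝ))/2^i) := by
    intro i hi k hk x hax hxb
    have h2i : (0:ℝ) < 2^i := pow_pos two_pos i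
    set u := (aa + (k:ℝ))/2^i with hu
    set v := (x + (k:ℝ))/2^i with hv
    have huv : u ≤ v := by
      rw [hu, hv, div_le_div_iff₀ h2i h2i]
      nlinarith
    have hu0 : 0 ≤ u := by
      rw [hu]
      apply div_nonneg _ (le_of_lt h2i)
      have := Nat.cast_nonneg (α := ℝ) k
      linarith
    have hμIoc : μ (Set.Ioc u v) = 0 := by
      refine le_antisymm ?_ zero_le
      rw [← hAt (2*(i+1)*m)]
      apply measure_mono
      rintro w ⟨hwu, hwv⟩
      have hw0 : 0 < w := lt_of_le_of_lt hu0 hwu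
      have hkR : (k:ℝ) + 1 ≤ 2^i := by
        have : ((k+1:ℕ):ℝ) ≤ ((2^i:ℕ):ℝ) := by exact_mod_cast hk
        push_cast at this; linarith
    ------
      have hw1 : w < 1 := by
        apply lt_of_le_of_lt hwv
        rw [hv, div_lt_one h2i]
        linarith
      refine ⟨⟨hw0, hw1⟩, ?_⟩
      rw [Set.mem_preimage, Set.mem_setOf_eq]
      set y := 2^i * w - (k:ℝ) with hy
      have hya : A0 m j < y := by
        have h' : aa + (k:ℝ) < w * 2^i := (div_lt_iff₀ h2i).1 hwu
        rw [hy]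
        have haA0 : A0 m j < aa := by
          rw [haa]
          have : (0:ℝ) < 1/2^(NN m + 1) := by positivity
          linarith
        linarith [h', haA0, mul_comm w ((2:ℝ)^i)]
      have hyb : y ≤ A0 m j + 1/2^(NN m) := by
        have h' : w * 2^i ≤ x + k := (le_div_iff₀ h2i).1 hwv
        rw [hy, ← hbb]
        linarith [h', hxb, mul_comm w ((2:ℝ)^i)]
      have hfl := floor_lemma m j hm hj hi hya hyb
      have hexp := E_add_self m hi
      have hkey : (2:ℝ)^((2*(i+1)*m+1)*m) * w = 2^(E m i) * y + (((k:ℤ) * 2^(E m i)) : ℤ) := by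
        push_cast
        rw [← hexp, pow_add, hy]
        ring
      show ⌊(2:ℝ)^((2*(i+1)*m+1)*m) * w⌋ % (2^m : ℤ) = (j:ℤ)
      rw [hkey, Int.floor_add_intCast, hfl]
      have hfac : ((k : ℤ) * 2^(E m i)) = ((k:ℤ) * 2^(E m i - m)) * 2^m := by
        rw [mul_assoc, ← pow_add, Nat.sub_add_cancel (m_le_E m i hm)]
      rw [hfac, Int.add_mul_emod_self_right]
      exact_mod_cast CN_mod m j hm hj hi
    have hvIcc : Set.Icc (0:ℝ) v = Set.Icc 0 u ∪ Set.Ioc u v :=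
      (Set.Icc_union_Ioc_eq_Icc hu0 huv).symm
    have hdisj : Disjoint (Set.Icc (0:ℝ) u) (Set.Ioc u v) :=
      (Set.Iic_disjoint_Ioc le_rfl).mono Set.Icc_subset_Iic_self le_rfl
    rw [hΦ, hΦ, hvIcc, measure_union hdisj measurableSet_Ioc, hμIoc, add_zero]
  -- conclusion
  have haI : aa ∈ Set.Icc (0:ℝ) 1 :=
    ⟨le_of_lt ha0pos, by linarith⟩
  have hbI : bb ∈ Set.Icc (0:ℝ) 1 :=
    ⟨by linarith, by linarith⟩
  have hconst : ∀ x ∈ Set.Icc aa bb, φ x = φ aa := by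
    rintro x ⟨h1, h2⟩
    rw [hφ, hφ]
    congr 1
    apply Finset.sum_congr rfl
    intro i hi
    apply Finset.sum_congr rfl
    intro k hk
    rw [Finset.mem_range] at hi hk
    rw [hterm i hi k hk x h1 h2]
  refine ⟨?_, aa, bb, haabb, haI, hbI, hconst⟩
  intro hsm
  have h1 := hsm haI hbI haabb
  have h2 := hconst bb ⟨le_of_lt haabb, le_refl bb⟩
  linarith
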